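/- Margulis' non-properness criterion for opposite signs: if γ, η are hyperbolic affine isometries of R^{2,1} with α(γ) > 0 and α(η) < 0 (or vice versa), then the group ⟨γ, η⟩ does not act properly discontinuously on R^{2,1}. -/

import Mathlib

noncomputable section

/-- The Lorentzian bilinear form of signature (2,1) on ℝ³. -/
def ldot (x y : Fin 3 → ℝ) : ℝ := x 0 * y 0 + x 1 * y 1 - x 2 * y 2

/-- The Lorentz cross-product, the unique bilinear map with ⟨u, v ⊠ w⟩ = det[u v w]. -/
def lcross (v w : Fin 3 → ℝ) : Fin 3 → ℝ :=
  ![v 1 * w 2 - v 2 * w 1, v 2 * w 0 - v 0 * w 2, -(v 0 * w 1 - v 1 * w 0)]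

/-- Determinant of the 3×3 matrix with columns x, y, z. -/
def det3 (x y z : Fin 3 → ℝ) : ℝ := (Matrix.transpose (Matrix.of ![x, y, z])).det

/-- Membership in SO(2,1)⁰: preserves the Lorentzian form, has determinant 1,
and preserves the future lightcone. -/
def IsSOplus (g : Matrix (Fin 3) (Fin 3) ℝ) : Prop :=
  (∀ x y : Fin 3 → ℝ, ldot (g.mulVec x) (g.mulVec y) = ldot x y) ∧
  g.det = 1 ∧
  (∀ x : Fin 3 → ℝ, ldot x x = 0 → x ≠ 0 → x 2 > 0 → (g.mulVec x) 2 > 0)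

/-- c is a (real) eigenvalue of the 3×3 matrix g. -/
def IsEigenvalue (g : Matrix (Fin 3) (Fin 3) ℝ) (c : ℝ) : Prop :=
  ∃ v : Fin 3 → ℝ, v ≠ 0 ∧ g.mulVec v = c • v

/-- x has Euclidean length one. -/
def EuclUnit (x : Fin 3 → ℝ) : Prop := x 0 ^ 2 + x 1 ^ 2 + x 2 ^ 2 = 1

/-- A future-pointing lightlike vector. -/
def IsFutureNull (x : Fin 3 → ℝ) : Prop := ldot x x = 0 ∧ x 2 > 0

/-- The null frame of a hyperbolic g ∈ SO(2,1)⁰ : x0 is the unit-spacelike 1-eigenvector,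
xm and xp are future-pointing Euclidean-unit eigenvectors for the eigenvalues λ and λ⁻¹
with 0 < λ < 1, and (x0, xm, xp) is positively oriented.  These conditions determine
x0 = x⁰(g), xm = x⁻(g), xp = x⁺(g) uniquely. -/
def IsNullFrameOf (g : Matrix (Fin 3) (Fin 3) ℝ) (x0 xm xp : Fin 3 → ℝ) : Prop :=
  g.mulVec x0 = x0 ∧ ldot x0 x0 = 1 ∧
  IsFutureNull xm ∧ EuclUnit xm ∧ IsFutureNull xp ∧ EuclUnit xp ∧
  ∃ l : ℝ, 0 < l ∧ l < 1 ∧ g.mulVec xm = l • xm ∧ g.mulVec xp = l⁻¹ • xp ∧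
    det3 x0 xm xp > 0

/-- g is hyperbolic: it admits three distinct real eigenvalues. -/
def IsHyperbolic (g : Matrix (Fin 3) (Fin 3) ℝ) : Prop :=
  ∃ a b c : ℝ, a ≠ b ∧ b ≠ c ∧ a ≠ c ∧
    IsEigenvalue g a ∧ IsEigenvalue g b ∧ IsEigenvalue g c

namespace MAux


lemma det3_eq (x y z : Fin 3 → ℝ) : det3 x y z =
    x 0 * (y 1 * z 2 - y 2 * z 1) - y 0 * (x 1 * z 2 - x 2 * z 1) + z 0 * (x 1 * y 2 - x 2 * y 1) := by
  simp [det3, Matrix.det_fin_three, Matrix.transpose_apply, Matrix.vecHead, Matrix.vecTail]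
  ring

lemma vec_ext {x y : Fin 3 → ℝ} (h0 : x 0 = y 0) (h1 : x 1 = y 1) (h2 : x 2 = y 2) : x = y := by
  funext i
  fin_cases i <;> assumption

lemma cramer {u v w : Fin 3 → ℝ} (hD : det3 u v w ≠ 0) (z : Fin 3 → ℝ) :
    ∃ a b c : ℝ, z = a • u + b • v + c • w := by
  refine ⟨det3 z v w / det3 u v w, det3 u z w / det3 u v w, det3 u v z / det3 u v w, ?_⟩
  have key0 : det3 z v w * u 0 + det3 u z w * v 0 + det3 u v z * w 0 = det3 u v w * z 0 := by
    simp only [det3_eq]; ring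
  have key1 : det3 z v w * u 1 + det3 u z w * v 1 + det3 u v z * w 1 = det3 u v w * z 1 := by
    simp only [det3_eq]; ring
  have key2 : det3 z v w * u 2 + det3 u z w * v 2 + det3 u v z * w 2 = det3 u v w * z 2 := by
    simp only [det3_eq]; ring
  apply vec_ext <;>
    · simp only [Pi.add_apply, Pi.smul_apply, smul_eq_mul]
      field_simp
      linarith [key0, key1, key2]

lemma ldot_comm (x y : Fin 3 → ℝ) : ldot x y = ldot y x := by simp [ldot]; ring

lemma perp_eq_zero {u v w : Fin 3 → ℝ} (hD : det3 u v w ≠ 0) {z : Fin 3 → ℝ}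
    (hu : ldot z u = 0) (hv : ldot z v = 0) (hw : ldot z w = 0) : z = 0 := by
  have hall : ∀ x, ldot z x = 0 := by
    intro x
    obtain ⟨a, b, c, rfl⟩ := cramer hD x
    have : ldot z (a • u + b • v + c • w) = a * ldot z u + b * ldot z v + c * ldot z w := by
      simp [ldot, Pi.add_apply, Pi.smul_apply, smul_eq_mul]; ring
    rw [this, hu, hv, hw]; ring
  have h0 := hall ![1, 0, 0]
  have h1 := hall ![0, 1, 0]
  have h2 := hall ![0, 0, 1]
  simp [ldot] at h0 h1 h2
  funext i
  fin_cases i <;> simp [h0, h1, h2]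

lemma null_nonpos {x y : Fin 3 → ℝ} (hx : IsFutureNull x) (hy : IsFutureNull y) :
    ldot x y ≤ 0 := by
  obtain ⟨hx0, hx2⟩ := hx
  obtain ⟨hy0, hy2⟩ := hy
  simp only [ldot] at hx0 hy0 ⊢
  nlinarith [sq_nonneg (x 0 * y 1 - x 1 * y 0), mul_pos hx2 hy2,
    sq_nonneg (x 0 * y 0 + x 1 * y 1 + x 2 * y 2)]

lemma null_collinear {x y : Fin 3 → ℝ} (hx : IsFutureNull x) (hy : IsFutureNull y)
    (hxy : ldot x y = 0) : y = (y 2 / x 2) • x := by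
  obtain ⟨hx0, hx2⟩ := hx
  obtain ⟨hy0, hy2⟩ := hy
  simp only [ldot] at hx0 hy0 hxy
  have hcross : (x 0 * y 1 - x 1 * y 0) ^ 2 = 0 := by
    linear_combination (y 0 * y 0 + y 1 * y 1) * hx0 + x 2 * x 2 * hy0 -
      (x 0 * y 0 + x 1 * y 1 + x 2 * y 2) * hxy
  have hc : x 0 * y 1 - x 1 * y 0 = 0 := by
    have := sq_eq_zero_iff.mp hcross; linarith
  have hx2' : x 2 ≠ 0 := ne_of_gt hx2
  have h0 : y 0 * x 2 ^ 2 = x 0 * y 2 * x 2 := by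
    linear_combination x 0 * hxy - y 0 * hx0 - x 1 * hc
  have h1 : y 1 * x 2 ^ 2 = x 1 * y 2 * x 2 := by
    linear_combination x 1 * hxy - y 1 * hx0 + x 0 * hc
  apply vec_ext <;> simp only [Pi.smul_apply, smul_eq_mul] <;> field_simp
  · nlinarith [h0]
  · nlinarith [h1]

lemma geom_bound {r : ℝ} (hr0 : 0 < r) (hr1 : r < 1) :
    ∃ C : ℝ, 0 ≤ C ∧ ∀ n : ℕ, (n : ℝ) * r ^ n ≤ C := by
  set d : ℝ := (1 - r) / r with hd
  have hdpos : 0 < d := div_pos (by linarith) hr0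
  refine ⟨1 / d, by positivity, fun n => ?_⟩
  have hr' : r = 1 / (1 + d) := by
    rw [hd]; field_simp; ring
  have hpow : (1 : ℝ) + n * d ≤ (1 + d) ^ n := by
    have := one_add_mul_le_pow (a := d) (by linarith) n
    linarith
  have hp1 : (0:ℝ) < (1 + d) ^ n := by positivity
  have hrn : (n : ℝ) * r ^ n = n / (1 + d) ^ n := by rw [hr']; simp [div_pow]; ring
  rw [hrn, div_le_div_iff₀ hp1 hdpos]
  nlinarith



-- test module tactic availability
example (x y : Fin 3 → ℝ) (a : ℝ) : a • (x + y) = a • y + a • x := by module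
-- dynamics
lemma affine_pow_apply {γ : Equiv.Perm (Fin 3 → ℝ)} {g : Matrix (Fin 3) (Fin 3) ℝ}
    {v p A m : Fin 3 → ℝ} {alg lam : ℝ}
    (hγ : ∀ x, γ x = g.mulVec x + v)
    (hax : γ p = p + alg • A) (hgA : g.mulVec A = A) (hgm : g.mulVec m = lam • m) :
    ∀ (M : ℕ) (a d : ℝ), (γ ^ M) (p + a • A + d • m) = p + (a + M * alg) • A + (lam ^ M * d) • m := by
  intro M
  induction M with
  | zero =>
    intro a d
    simp only [pow_zero, Equiv.Perm.coe_one, id_eq, Nat.cast_zero, zero_mul, add_zero, one_mul]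
  | succ M ih =>
    intro a d
    have hstep : ∀ (a' d' : ℝ), γ (p + a' • A + d' • m) = p + (a' + alg) • A + (lam * d') • m := by
      intro a' d'
      have h1 : γ (p + a' • A + d' • m) = g.mulVec p + v + a' • A + (lam * d') • m := by
        rw [hγ]
        rw [Matrix.mulVec_add, Matrix.mulVec_add, Matrix.mulVec_smul, Matrix.mulVec_smul,
          hgA, hgm]
        module
      have h2 : g.mulVec p + v = p + alg • A := by
        have := hax; rw [hγ] at this; exact this
      rw [h1, h2]; module
    have hpow : (γ ^ (M + 1)) (p + a • A + d • m) = γ ((γ ^ M) (p + a • A + d • m)) := by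
      rw [pow_succ']
      exact Equiv.Perm.mul_apply _ _ _
    rw [hpow, ih a d, hstep]
    push_cast
    congr 1
    · congr 1; ring_nf
    · congr 1; ring
lemma affine_pow_exists {γ : Equiv.Perm (Fin 3 → ℝ)} {g : Matrix (Fin 3) (Fin 3) ℝ}
    {v : Fin 3 → ℝ} (hγ : ∀ x, γ x = g.mulVec x + v) :
    ∀ a : ℕ, ∃ u, ∀ x, (γ ^ a) x = (g ^ a).mulVec x + u := by
  intro a
  induction a with
  | zero => exact ⟨0, by simp⟩
  | succ a ih =>
    obtain ⟨u, hu⟩ := ih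
    refine ⟨g.mulVec u + v, fun x => ?_⟩
    have : (γ ^ (a + 1)) x = γ ((γ ^ a) x) := by rw [pow_succ']; exact Equiv.Perm.mul_apply _ _ _
    rw [this, hu, hγ, Matrix.mulVec_add, pow_succ', ← Matrix.mulVec_mulVec]
    abel
lemma pow_eig {g : Matrix (Fin 3) (Fin 3) ℝ} {m : Fin 3 → ℝ} {lam : ℝ}
    (hgm : g.mulVec m = lam • m) : ∀ a : ℕ, (g ^ a).mulVec m = (lam ^ a) • m := by
  intro a
  induction a with
  | zero => simp
  | succ a ih =>
    rw [pow_succ', ← Matrix.mulVec_mulVec, ih, Matrix.mulVec_smul, hgm, smul_smul, pow_succ, mul_comm]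
lemma pow_ldot {g : Matrix (Fin 3) (Fin 3) ℝ}
    (hgi : ∀ x y, ldot (g.mulVec x) (g.mulVec y) = ldot x y) :
    ∀ (a : ℕ) (x y : Fin 3 → ℝ), ldot ((g ^ a).mulVec x) ((g ^ a).mulVec y) = ldot x y := by
  intro a
  induction a with
  | zero => simp
  | succ a ih =>
    intro x y
    rw [pow_succ', ← Matrix.mulVec_mulVec, ← Matrix.mulVec_mulVec, hgi, ih]


lemma ldot_add3_left (u v w z : Fin 3 → ℝ) (a b c : ℝ) :
    ldot (a • u + b • v + c • w) z = a * ldot u z + b * ldot v z + c * ldot w z := by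
  simp only [ldot, Pi.add_apply, Pi.smul_apply, smul_eq_mul]; ring

lemma ldot_sub_smul_left (x y z : Fin 3 → ℝ) (c : ℝ) :
    ldot (x - c • y) z = ldot x z - c * ldot y z := by
  simp only [ldot, Pi.sub_apply, Pi.smul_apply, smul_eq_mul]; ring

lemma ldot_comm' (x y : Fin 3 → ℝ) : ldot x y = ldot y x := by simp only [ldot]; ring

lemma det3_smul_third (x y : Fin 3 → ℝ) (c : ℝ) : det3 x y (c • y) = 0 := by
  simp only [det3_eq, Pi.smul_apply, smul_eq_mul]; ring

lemma ldot_add3_right (z u v w : Fin 3 → ℝ) (a b c : ℝ) :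
    ldot z (a • u + b • v + c • w) = a * ldot z u + b * ldot z v + c * ldot z w := by
  simp only [ldot, Pi.add_apply, Pi.smul_apply, smul_eq_mul]; ring

lemma null_ldot_neg {A x y : Fin 3 → ℝ} (hx : IsFutureNull x) (hy : IsFutureNull y)
    (hD : det3 A x y ≠ 0) : ldot x y < 0 := by
  rcases lt_or_eq_of_le (null_nonpos hx hy) with hlt | heq
  · exact hlt
  · exact absurd (by rw [null_collinear hx hy heq]; exact det3_smul_third _ _ _) hD

lemma k3_pos {A m P B m' P' : Fin 3 → ℝ}
    (hAm : ldot A m = 0) (hmm : ldot m m = 0) (hPP : ldot P P = 0)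
    (hBB : ldot B B = 1) (hBm' : ldot B m' = 0) (hBP' : ldot B P' = 0)
    (hm'm' : ldot m' m' = 0) (hP'P' : ldot P' P' = 0)
    (hD : 0 < det3 A m P) (hD' : 0 < det3 B m' P')
    (hkg : ldot m P < 0) (hkh : ldot m' P' < 0) (hk2 : ldot m P' < 0) :
    0 < ldot (A - (ldot A P' / ldot m P') • m) B := by
  set k1 : ℝ := ldot A P' with hk1def
  set k2 : ℝ := ldot m P' with hk2def
  set kg : ℝ := ldot m P with hkgdef
  set kh : ℝ := ldot m' P' with hkhdef
  set e : Fin 3 → ℝ := A - (k1 / k2) • m with hedef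
  have hk2ne : k2 ≠ 0 := ne_of_lt hk2
  have hkgne : kg ≠ 0 := ne_of_lt hkg
  have hkhne : kh ≠ 0 := ne_of_lt hkh
  have hDne := ne_of_gt hD
  have hD'ne := ne_of_gt hD'
  -- decompose P' in the (A, m, P) basis
  obtain ⟨pa, pb, pc, hPdec⟩ := cramer hDne P'
  have hpc : pc = k2 / kg := by
    have h1 : k2 = pa * ldot m A + pb * ldot m m + pc * ldot m P := by
      rw [hk2def, hPdec, ldot_add3_right]
    rw [ldot_comm' m A, hAm, hmm, ← hkgdef] at h1
    field_simp
    linarith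
  -- decompose e in the (B, m', P') basis
  obtain ⟨xa, xb, xc, hedec⟩ := cramer hD'ne e
  have heP' : ldot e P' = 0 := by
    rw [hedef, ldot_sub_smul_left, ← hk1def, ← hk2def]
    field_simp
    ring
  have hxb : xb = 0 := by
    have h1 : ldot e P' = xa * ldot B P' + xb * ldot m' P' + xc * ldot P' P' := by
      rw [hedec, ldot_add3_left]
    rw [heP', hBP', hP'P', ← hkhdef] at h1
    have : xb * kh = 0 := by linarith
    exact (mul_eq_zero.mp this).resolve_right hkhne
  have hk3 : ldot e B = xa := by
    have h1 : ldot e B = xa * ldot B B + xb * ldot m' B + xc * ldot P' B := by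
      rw [hedec, ldot_add3_left]
    rw [hBB, ldot_comm' m' B, hBm', ldot_comm' P' B, hBP', hxb] at h1
    rw [h1]; ring
  -- decompose m in the (B, m', P') basis
  obtain ⟨ma, mb, mc, hmdec⟩ := cramer hD'ne m
  have hmb : mb = k2 / kh := by
    have h1 : k2 = ma * ldot B P' + mb * ldot m' P' + mc * ldot P' P' := by
      rw [hk2def]
      nth_rewrite 1 [hmdec]
      rw [ldot_comm', ldot_add3_right]
      rw [ldot_comm' P' B, ldot_comm' P' m', ldot_comm' P' P']
    rw [hBP', hP'P', ← hkhdef] at h1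
    field_simp
    linarith
  -- two computations of det3 e m P'
  have hE1 : det3 e m P' = pc * det3 A m P := by
    rw [hedef, hPdec]
    simp only [det3_eq, Pi.add_apply, Pi.sub_apply, Pi.smul_apply, smul_eq_mul]
    ring
  have hE2 : det3 e m P' = (xa * mb - xb * ma) * det3 B m' P' := by
    nth_rewrite 1 [hedec]
    nth_rewrite 1 [hmdec]
    simp only [det3_eq, Pi.add_apply, Pi.smul_apply, smul_eq_mul]
    ring
  have hxa : xa * mb * det3 B m' P' = pc * det3 A m P := by
    rw [hxb] at hE2; rw [hE2] at hE1; linarith [hE1]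
  have hpcpos : 0 < pc := by rw [hpc]; exact div_pos_of_neg_of_neg hk2 hkg
  have hmbpos : 0 < mb := by rw [hmb]; exact div_pos_of_neg_of_neg hk2 hkh
  have hxapos : 0 < xa := by
    have h2 : 0 < pc * det3 A m P := mul_pos hpcpos hD
    nlinarith [mul_pos hmbpos hD']
  rw [hk3]
  exact hxapos


lemma ldot_comm'' (x y : Fin 3 → ℝ) : ldot x y = ldot y x := by simp only [ldot]; ring
lemma ldot_sub_add3 (v u1 u2 u3 z : Fin 3 → ℝ) (a b c : ℝ) :
    ldot (v - (a • u1 + b • u2 + c • u3)) z =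
      ldot v z - a * ldot u1 z - b * ldot u2 z - c * ldot u3 z := by
  simp only [ldot, Pi.sub_apply, Pi.add_apply, Pi.smul_apply, smul_eq_mul]; ring
lemma ldot_sub_smul_left' (x y z : Fin 3 → ℝ) (c : ℝ) :
    ldot (x - c • y) z = ldot x z - c * ldot y z := by
  simp only [ldot, Pi.sub_apply, Pi.smul_apply, smul_eq_mul]; ring

lemma axis_point {g : Matrix (Fin 3) (Fin 3) ℝ} {A m P : Fin 3 → ℝ} (v : Fin 3 → ℝ) {lam : ℝ}
    (hAA : ldot A A = 1) (hAm : ldot A m = 0) (hAP : ldot A P = 0)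
    (hmm : ldot m m = 0) (hPP : ldot P P = 0)
    (hgm : g.mulVec m = lam • m) (hgP : g.mulVec P = lam⁻¹ • P)
    (hlam0 : 0 < lam) (hlam1 : lam < 1) (hkg : ldot m P ≠ 0) (hD : det3 A m P ≠ 0) :
    ∃ p, g.mulVec p + v = p + (ldot v A) • A := by
  have hlamne : lam ≠ 0 := ne_of_gt hlam0
  have hl1 : (1 : ℝ) - lam ≠ 0 := fun hc => by nlinarith
  have hl2 : (1 : ℝ) - lam⁻¹ ≠ 0 := by
    intro hc
    have h' : lam⁻¹ = 1 := by linarith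
    rw [inv_eq_one] at h'
    exact absurd h' (by linarith)
  set kg : ℝ := ldot m P with hkgdef
  set al : ℝ := ldot v A with haldef
  set s : ℝ := ldot (v - al • A) P / kg with hsdef
  set t : ℝ := ldot (v - al • A) m / kg with htdef
  refine ⟨(s / (1 - lam)) • m + (t / (1 - lam⁻¹)) • P, ?_⟩
  have hv : v = al • A + s • m + t • P := by
    apply sub_eq_zero.mp
    apply perp_eq_zero hD
    · rw [ldot_sub_add3, hAA, ldot_comm'' m A, hAm, ldot_comm'' P A, hAP]; ring
    · rw [ldot_sub_add3, hAm, hmm, ldot_comm'' P m, ← hkgdef]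
      have ht : t * kg = ldot (v - al • A) m := by rw [htdef]; field_simp
      rw [ldot_sub_smul_left', hAm] at ht
      linarith
    · rw [ldot_sub_add3, hAP, ← hkgdef, hPP]
      have hs : s * kg = ldot (v - al • A) P := by rw [hsdef]; field_simp
      rw [ldot_sub_smul_left', hAP] at hs
      linarith
  have hgp : g.mulVec ((s / (1 - lam)) • m + (t / (1 - lam⁻¹)) • P)
      = (lam * (s / (1 - lam))) • m + (lam⁻¹ * (t / (1 - lam⁻¹))) • P := by
    rw [Matrix.mulVec_add, Matrix.mulVec_smul, Matrix.mulVec_smul, hgm, hgP]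
    module
  rw [hgp]
  nth_rewrite 1 [hv]
  have hl1' : lam - 1 ≠ 0 := fun hc => hl1 (by linarith)
  have hl2' : lam⁻¹ - 1 ≠ 0 := fun hc => hl2 (by linarith)
  match_scalars <;> (field_simp; try ring)


lemma ldot_add2_left (x u v z : Fin 3 → ℝ) (a b : ℝ) :
    ldot (x + a • u + b • v) z = ldot x z + a * ldot u z + b * ldot v z := by
  simp only [ldot, Pi.add_apply, Pi.smul_apply, smul_eq_mul]; ring


lemma bnd1 {mu cc0 cc1 Cmu : ℝ} (n : ℕ) (hmu0 : 0 < mu) (hmu1 : mu < 1)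
    (hCmu : (n : ℝ) * mu ^ n ≤ Cmu) : |mu ^ n * (cc0 + n * cc1)| ≤ |cc0| + Cmu * |cc1| := by
  have hmp : 0 < mu ^ n := pow_pos hmu0 n
  have hmp1 : mu ^ n ≤ 1 := pow_le_one₀ (le_of_lt hmu0) (le_of_lt hmu1)
  have e1 : |mu ^ n * (cc0 + n * cc1)| ≤ |mu ^ n * cc0| + |mu ^ n * (n * cc1)| := by
    have heq : mu ^ n * (cc0 + n * cc1) = mu ^ n * cc0 + mu ^ n * (n * cc1) := by ring
    rw [heq]; exact abs_add_le _ _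
  have e2 : |mu ^ n * cc0| = mu ^ n * |cc0| := by rw [abs_mul, abs_of_pos hmp]
  have e3 : |mu ^ n * (n * cc1)| = ((n : ℝ) * mu ^ n) * |cc1| := by
    rw [abs_mul, abs_mul, abs_of_pos hmp, Nat.abs_cast]; ring
  have e4 : mu ^ n * |cc0| ≤ |cc0| := by nlinarith [abs_nonneg cc0]
  have e5 : ((n : ℝ) * mu ^ n) * |cc1| ≤ Cmu * |cc1| :=
    mul_le_mul_of_nonneg_right hCmu (abs_nonneg cc1)
  calc |mu ^ n * (cc0 + n * cc1)| ≤ |mu ^ n * cc0| + |mu ^ n * (n * cc1)| := e1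
    _ = mu ^ n * |cc0| + ((n : ℝ) * mu ^ n) * |cc1| := by rw [e2, e3]
    _ ≤ |cc0| + Cmu * |cc1| := by linarith

lemma aasmall {aa0 aa1 alg nr N0r : ℝ} (hpos : 0 < -aa1)
    (h1 : aa0 + alg ≤ N0r * (-aa1)) (hn : N0r ≤ nr) : aa0 + nr * aa1 ≤ -alg := by
  nlinarith

lemma ceil_props {y alg : ℝ} (halg : 0 < alg) (h1 : alg ≤ y) :
    1 ≤ (⌈y / alg⌉).toNat ∧ 0 ≤ -y + ((⌈y / alg⌉).toNat : ℝ) * alg ∧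
      -y + ((⌈y / alg⌉).toNat : ℝ) * alg < alg := by
  have hx1 : (1 : ℝ) ≤ y / alg := by rw [le_div_iff₀ halg]; linarith
  have hcpos : 0 < ⌈y / alg⌉ := Int.ceil_pos.mpr (by linarith)
  have hMceil : ((⌈y / alg⌉).toNat : ℤ) = ⌈y / alg⌉ := Int.toNat_of_nonneg (le_of_lt hcpos)
  have hMr : (((⌈y / alg⌉).toNat : ℕ) : ℝ) = ((⌈y / alg⌉ : ℤ) : ℝ) := by exact_mod_cast hMceil
  have hge : y / alg ≤ (((⌈y / alg⌉).toNat : ℕ) : ℝ) := by rw [hMr]; exact Int.le_ceil _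
  have hlt : (((⌈y / alg⌉).toNat : ℕ) : ℝ) < y / alg + 1 := by
    rw [hMr]
    have := Int.ceil_lt_add_one (y / alg)
    exact_mod_cast this
  refine ⟨?_, ?_, ?_⟩
  · have h2 : (1 : ℤ) ≤ ((⌈y / alg⌉).toNat : ℤ) := by rw [hMceil]; exact hcpos
    exact_mod_cast h2
  · have := (div_le_iff₀ halg).mp hge
    linarith
  · have h2 : (((⌈y / alg⌉).toNat : ℕ) : ℝ) - 1 < y / alg := by linarith
    have := (lt_div_iff₀ halg).mp h2
    linarith

lemma bnd2 {lam dd0 dd1 alg aa0 aa1 Clam : ℝ} (n M : ℕ)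
    (hlam0 : 0 < lam) (hlam1 : lam < 1) (halg : 0 < alg) (hpos : 0 < -aa1)
    (hnle : (n : ℝ) * (-aa1) ≤ (M : ℝ) * alg + aa0) (hClam : (M : ℝ) * lam ^ M ≤ Clam) :
    |lam ^ M * (dd0 + n * dd1)| ≤ |dd0| + |dd1| * ((alg * Clam + |aa0|) / (-aa1)) := by
  have hlp : 0 < lam ^ M := pow_pos hlam0 _
  have hlp1 : lam ^ M ≤ 1 := pow_le_one₀ (le_of_lt hlam0) (le_of_lt hlam1)
  have hkey : lam ^ M * ((n : ℝ) * (-aa1)) ≤ alg * Clam + |aa0| := by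
    have h1 : lam ^ M * ((n : ℝ) * (-aa1)) ≤ lam ^ M * ((M : ℝ) * alg + aa0) :=
      mul_le_mul_of_nonneg_left hnle (le_of_lt hlp)
    nlinarith [le_abs_self aa0, abs_nonneg aa0]
  have hml : lam ^ M * (n : ℝ) ≤ (alg * Clam + |aa0|) / (-aa1) := by
    rw [le_div_iff₀ hpos]
    nlinarith
  have e1 : |lam ^ M * (dd0 + n * dd1)| ≤ |lam ^ M * dd0| + |lam ^ M * (n * dd1)| := by
    have heq : lam ^ M * (dd0 + n * dd1) = lam ^ M * dd0 + lam ^ M * (n * dd1) := by ring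
    rw [heq]; exact abs_add_le _ _
  have e2 : |lam ^ M * dd0| ≤ |dd0| := by
    rw [abs_mul, abs_of_pos hlp]
    nlinarith [abs_nonneg dd0]
  have e3 : |lam ^ M * (n * dd1)| ≤ ((alg * Clam + |aa0|) / (-aa1)) * |dd1| := by
    rw [abs_mul, abs_mul, abs_of_pos hlp, Nat.abs_cast, ← mul_assoc]
    exact mul_le_mul_of_nonneg_right hml (abs_nonneg dd1)
  calc |lam ^ M * (dd0 + n * dd1)| ≤ |lam ^ M * dd0| + |lam ^ M * (n * dd1)| := e1
    _ ≤ |dd0| + ((alg * Clam + |aa0|) / (-aa1)) * |dd1| := by linarith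
    _ = |dd0| + |dd1| * ((alg * Clam + |aa0|) / (-aa1)) := by ring

lemma ceil_mono_step {y z alg : ℝ} (halg : 0 < alg) (h1 : alg ≤ y)
    (h2 : y + 2 * alg ≤ z) : (⌈y / alg⌉).toNat < (⌈z / alg⌉).toNat := by
  have hcy : 0 < ⌈y / alg⌉ := Int.ceil_pos.mpr (div_pos (by linarith) halg)
  have hcz : 0 < ⌈z / alg⌉ := Int.ceil_pos.mpr (div_pos (by linarith) halg)
  have hyz : ⌈y / alg⌉ < ⌈z / alg⌉ := by
    have hd : y / alg + 2 ≤ z / alg := by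
      rw [div_add' _ _ _ (ne_of_gt halg), div_le_div_iff₀ halg halg]
      nlinarith
    have hy1 : (⌈y / alg⌉ : ℝ) < y / alg + 1 := Int.ceil_lt_add_one _
    have hz1 : z / alg ≤ (⌈z / alg⌉ : ℝ) := Int.le_ceil _
    have : ((⌈y / alg⌉ : ℤ) : ℝ) + 1 < ((⌈z / alg⌉ : ℤ) : ℝ) := by linarith
    exact_mod_cast (by linarith : ((⌈y / alg⌉ : ℤ) : ℝ) < ((⌈z / alg⌉ : ℤ) : ℝ))
  omega

lemma step_ineq {aa0 aa1 alg Sr n1r n2r : ℝ} (hstep : 2 * alg ≤ Sr * (-aa1))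
    (hn2 : n2r = n1r + Sr) : -(aa0 + n1r * aa1) + 2 * alg ≤ -(aa0 + n2r * aa1) := by
  rw [hn2]; nlinarith

lemma prod_pow_ne_one {lam mu : ℝ} (hlam0 : 0 < lam) (hlam1 : lam < 1) (hmu0 : 0 < mu)
    (hmu1 : mu < 1) {a b : ℕ} (ha : 1 ≤ a) (hb : 1 ≤ b) : lam ^ a * mu ^ b ≠ 1 := by
  have h1 : lam ^ a < 1 := pow_lt_one₀ (le_of_lt hlam0) hlam1 (by omega)
  have h2 : mu ^ b < 1 := pow_lt_one₀ (le_of_lt hmu0) hmu1 (by omega)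
  have h3 : 0 < lam ^ a := pow_pos hlam0 a
  have h4 : 0 < mu ^ b := pow_pos hmu0 b
  nlinarith

lemma sstep {x alg S0r : ℝ} (hx : 0 < x) (h1 : 2 * alg ≤ S0r * x) :
    2 * alg ≤ (S0r + 1) * x := by nlinarith

lemma ldot_smul_both (x y : Fin 3 → ℝ) (a b : ℝ) : ldot (a • x) (b • y) = a * b * ldot x y := by
  simp only [ldot, Pi.smul_apply, smul_eq_mul]; ring

set_option maxHeartbeats 2000000 in
lemma key (G : Subgroup (Equiv.Perm (Fin 3 → ℝ)))
    (g h : Matrix (Fin 3) (Fin 3) ℝ)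
    (hgi : ∀ x y, ldot (g.mulVec x) (g.mulVec y) = ldot x y)
    (hhi : ∀ x y, ldot (h.mulVec x) (h.mulVec y) = ldot x y)
    (vg vh A m P B m' P' : Fin 3 → ℝ) (lam mu : ℝ)
    (hlam0 : 0 < lam) (hlam1 : lam < 1) (hmu0 : 0 < mu) (hmu1 : mu < 1)
    (hgA : g.mulVec A = A) (hAA : ldot A A = 1)
    (hgm : g.mulVec m = lam • m) (hgP : g.mulVec P = lam⁻¹ • P)
    (hm : IsFutureNull m) (hP : IsFutureNull P) (hD : 0 < det3 A m P)
    (hhB : h.mulVec B = B) (hBB : ldot B B = 1)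
    (hhm : h.mulVec m' = mu • m') (hhP : h.mulVec P' = mu⁻¹ • P')
    (hm' : IsFutureNull m') (hP' : IsFutureNull P') (hD' : 0 < det3 B m' P')
    (halg : 0 < ldot vg A) (halh : ldot vh B < 0) (hk2ne : ldot m P' ≠ 0)
    (γ η : Equiv.Perm (Fin 3 → ℝ))
    (hγ : ∀ x, γ x = g.mulVec x + vg) (hη : ∀ x, η x = h.mulVec x + vh)
    (hγG : γ ∈ G) (hηG : η ∈ G) :
    ¬ ∀ K : Set (Fin 3 → ℝ), IsCompact K →
        {w : G | ((fun x => (w : Equiv.Perm (Fin 3 → ℝ)) x) '' K ∩ K).Nonempty}.Finite := by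
  intro hprop
  -- eigenvalue basics
  have hlamne : lam ≠ 0 := ne_of_gt hlam0
  have hmune : mu ≠ 0 := ne_of_gt hmu0
  have hlaminv1 : lam⁻¹ ≠ 1 := by
    rw [ne_eq, inv_eq_one]; exact ne_of_lt hlam1
  have hmuinv1 : mu⁻¹ ≠ 1 := by rw [ne_eq, inv_eq_one]; exact ne_of_lt hmu1
  -- orthogonality relations
  have hAm : ldot A m = 0 := by
    have h1 := hgi A m
    rw [hgA, hgm] at h1
    have h2 : ldot A (lam • m) = lam * ldot A m := by
      simp only [ldot, Pi.smul_apply, smul_eq_mul]; ring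
    rw [h2] at h1
    have : (lam - 1) * ldot A m = 0 := by linarith
    rcases mul_eq_zero.mp this with h' | h'
    · exact absurd (by linarith : lam = 1) (ne_of_lt hlam1)
    · exact h'
  have hAP : ldot A P = 0 := by
    have h1 := hgi A P
    rw [hgA, hgP] at h1
    have h2 : ldot A (lam⁻¹ • P) = lam⁻¹ * ldot A P := by
      simp only [ldot, Pi.smul_apply, smul_eq_mul]; ring
    rw [h2] at h1
    have : (lam⁻¹ - 1) * ldot A P = 0 := by linarith
    rcases mul_eq_zero.mp this with h' | h'
    · exact absurd (by linarith : lam⁻¹ = 1) hlaminv1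
    · exact h'
  have hBm' : ldot B m' = 0 := by
    have h1 := hhi B m'
    rw [hhB, hhm] at h1
    have h2 : ldot B (mu • m') = mu * ldot B m' := by
      simp only [ldot, Pi.smul_apply, smul_eq_mul]; ring
    rw [h2] at h1
    have : (mu - 1) * ldot B m' = 0 := by linarith
    rcases mul_eq_zero.mp this with h' | h'
    · exact absurd (by linarith : mu = 1) (ne_of_lt hmu1)
    · exact h'
  have hBP' : ldot B P' = 0 := by
    have h1 := hhi B P'
    rw [hhB, hhP] at h1
    have h2 : ldot B (mu⁻¹ • P') = mu⁻¹ * ldot B P' := by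
      simp only [ldot, Pi.smul_apply, smul_eq_mul]; ring
    rw [h2] at h1
    have : (mu⁻¹ - 1) * ldot B P' = 0 := by linarith
    rcases mul_eq_zero.mp this with h' | h'
    · exact absurd (by linarith : mu⁻¹ = 1) hmuinv1
    · exact h'
  have hmm : ldot m m = 0 := hm.1
  have hPP : ldot P P = 0 := hP.1
  have hm'm' : ldot m' m' = 0 := hm'.1
  have hP'P' : ldot P' P' = 0 := hP'.1
  have hkg : ldot m P < 0 := null_ldot_neg hm hP (ne_of_gt hD)
  have hkh : ldot m' P' < 0 := null_ldot_neg hm' hP' (ne_of_gt hD')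
  have hk2 : ldot m P' < 0 := lt_of_le_of_ne (null_nonpos hm hP') hk2ne
  have hkgne : ldot m P ≠ 0 := ne_of_lt hkg
  have hkhne : ldot m' P' ≠ 0 := ne_of_lt hkh
  have hk3 : 0 < ldot (A - (ldot A P' / ldot m P') • m) B :=
    k3_pos hAm hmm hPP hBB hBm' hBP' hm'm' hP'P' hD hD' hkg hkh hk2
  obtain ⟨k1, hk1def⟩ : ∃ k1 : ℝ, k1 = ldot A P' := ⟨_, rfl⟩
  obtain ⟨k2, hk2def⟩ : ∃ k2 : ℝ, k2 = ldot m P' := ⟨_, rfl⟩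
  obtain ⟨kh, hkhdef⟩ : ∃ kh : ℝ, kh = ldot m' P' := ⟨_, rfl⟩
  obtain ⟨k3, hk3def⟩ : ∃ k3 : ℝ, k3 = ldot (A - (k1 / k2) • m) B := ⟨_, rfl⟩
  rw [← hk1def, ← hk2def] at hk3
  rw [← hk3def] at hk3
  rw [← hk2def] at hk2 hk2ne
  have hkhne0 : ldot m' P' ≠ 0 := hkhne
  rw [← hkhdef] at hkh hkhne
  have hk3ne : k3 ≠ 0 := ne_of_gt hk3
  -- axis points
  obtain ⟨p, hpax⟩ := axis_point (g := g) vg hAA hAm hAP hmm hPP hgm hgP hlam0 hlam1 hkgne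
    (ne_of_gt hD)
  obtain ⟨q, hqax⟩ := axis_point (g := h) vh hBB hBm' hBP' hm'm' hP'P' hhm hhP hmu0 hmu1 hkhne0
    (ne_of_gt hD')
  obtain ⟨alg, halgdef⟩ : ∃ alg : ℝ, alg = ldot vg A := ⟨_, rfl⟩
  obtain ⟨alh, halhdef⟩ : ∃ alh : ℝ, alh = ldot vh B := ⟨_, rfl⟩
  rw [← halgdef] at halg hpax
  rw [← halhdef] at halh hqax
  have hγax : γ p = p + alg • A := by rw [hγ]; exact hpax
  have hηax : η q = q + alh • B := by rw [hη]; exact hqax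
  have hDγ := affine_pow_apply hγ hγax hgA hgm
  have hDη := affine_pow_apply hη hηax hhB hhP
  -- the sequence of intersection points
  obtain ⟨cstar, hcstardef⟩ : ∃ c : ℝ, c = ldot (p - q) P' := ⟨_, rfl⟩
  obtain ⟨C0, hC0def⟩ : ∃ c : ℝ, c = ldot (p - q) B - (cstar / k2) * ldot m B := ⟨_, rfl⟩
  obtain ⟨aa, haadef⟩ : ∃ aa : ℕ → ℝ, ∀ n, aa n = ((n : ℝ) * alh - C0) / k3 :=
    ⟨_, fun n => rfl⟩
  obtain ⟨dd, hdddef⟩ : ∃ dd : ℕ → ℝ, ∀ n, dd n = -(cstar + aa n * k1) / k2 :=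
    ⟨_, fun n => rfl⟩
  obtain ⟨rr, hrrdef⟩ : ∃ rr : ℕ → (Fin 3 → ℝ), ∀ n, rr n = p + (aa n) • A + (dd n) • m :=
    ⟨_, fun n => rfl⟩
  obtain ⟨cc, hccdef⟩ : ∃ cc : ℕ → ℝ, ∀ n, cc n = ldot (rr n - q) m' / kh := ⟨_, fun n => rfl⟩
  have hrrsub : ∀ n, rr n - q = (p - q) + (aa n) • A + (dd n) • m := by
    intro n; rw [hrrdef n]; abel
  have hpairB : ∀ n, ldot (rr n - q) B = (n : ℝ) * alh := by
    intro n
    rw [hrrsub n, ldot_add2_left]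
    have hk3' : ldot A B = k3 + (k1 / k2) * ldot m B := by
      rw [hk3def, ldot_sub_smul_left']; ring
    have hC0' : ldot (p - q) B = C0 + (cstar / k2) * ldot m B := by
      rw [hC0def]; ring
    rw [hk3', hC0', hdddef n, haadef n]
    field_simp
    ring
  have hpairP' : ∀ n, ldot (rr n - q) P' = 0 := by
    intro n
    rw [hrrsub n, ldot_add2_left, ← hk1def, ← hk2def, ← hcstardef, hdddef n]
    field_simp
    ring
  have hrr2 : ∀ n, rr n = q + ((n : ℝ) * alh) • B + (cc n) • P' := by
    intro n
    obtain ⟨za, zb, zc, hzdec⟩ := cramer (ne_of_gt hD') (rr n - q)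
    have hzb : zb = 0 := by
      have h1 : ldot (rr n - q) P' = za * ldot B P' + zb * ldot m' P' + zc * ldot P' P' := by
        rw [hzdec, ldot_add3_left]
      rw [hpairP' n, hBP', hP'P', ← hkhdef] at h1
      have : zb * kh = 0 := by linarith
      exact (mul_eq_zero.mp this).resolve_right hkhne
    have hza : za = (n : ℝ) * alh := by
      have h1 : ldot (rr n - q) B = za * ldot B B + zb * ldot m' B + zc * ldot P' B := by
        rw [hzdec, ldot_add3_left]
      rw [hpairB n, hBB, ldot_comm'' m' B, hBm', ldot_comm'' P' B, hBP', hzb] at h1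
      linarith
    have hzc : zc = cc n := by
      have h1 : ldot (rr n - q) m' = za * ldot B m' + zb * ldot m' m' + zc * ldot P' m' := by
        rw [hzdec, ldot_add3_left]
      rw [hBm', hm'm', ldot_comm'' P' m', ← hkhdef, hzb] at h1
      rw [hccdef n]
      rw [h1]
      field_simp
      ring
    have : rr n = q + (rr n - q) := by abel
    rw [this, hzdec, hza, hzb, hzc]
    module
  -- affine expressions in n
  obtain ⟨aa1, haa1def⟩ : ∃ a : ℝ, a = alh / k3 := ⟨_, rfl⟩
  have haa1neg : aa1 < 0 := by rw [haa1def]; exact div_neg_of_neg_of_pos halh hk3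
  obtain ⟨aa0, haa0def⟩ : ∃ a : ℝ, a = -C0 / k3 := ⟨_, rfl⟩
  have haan : ∀ n : ℕ, aa n = aa0 + n * aa1 := by
    intro n; rw [haadef n, haa0def, haa1def]; field_simp; ring
  obtain ⟨dd0, hdd0⟩ : ∃ d : ℝ, d = -(cstar + aa0 * k1) / k2 := ⟨_, rfl⟩
  obtain ⟨dd1, hdd1⟩ : ∃ d : ℝ, d = -(aa1 * k1) / k2 := ⟨_, rfl⟩
  have hddn : ∀ n : ℕ, dd n = dd0 + n * dd1 := by
    intro n; rw [hdddef n, haan n, hdd0, hdd1]; field_simp; ring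
  obtain ⟨cc0, hcc0⟩ : ∃ c : ℝ, c = (ldot (p - q) m' + aa0 * ldot A m' + dd0 * ldot m m') / kh :=
    ⟨_, rfl⟩
  obtain ⟨cc1, hcc1⟩ : ∃ c : ℝ, c = (aa1 * ldot A m' + dd1 * ldot m m') / kh := ⟨_, rfl⟩
  have hccn : ∀ n : ℕ, cc n = cc0 + n * cc1 := by
    intro n
    rw [hccdef n, hrrsub n, ldot_add2_left, haan n, hddn n, hcc0, hcc1]
    field_simp; ring
  -- geometric bounds
  obtain ⟨Cmu, hCmu0, hCmu⟩ := geom_bound hmu0 hmu1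
  obtain ⟨Clam, hClam0, hClam⟩ := geom_bound hlam0 hlam1
  have hC1 : ∀ n : ℕ, |mu ^ n * cc n| ≤ |cc0| + Cmu * |cc1| := by
    intro n
    rw [hccn n]
    exact bnd1 n hmu0 hmu1 (hCmu n)
  -- exponents
  obtain ⟨MM, hMMdef⟩ : ∃ MM : ℕ → ℕ, ∀ n, MM n = (⌈-aa n / alg⌉).toNat := ⟨_, fun n => rfl⟩
  obtain ⟨N0, hN0⟩ := exists_nat_ge ((aa0 + alg) / (-aa1))
  have haa1pos : 0 < -aa1 := by linarith
  have haasmall : ∀ n : ℕ, N0 ≤ n → aa n ≤ -alg := by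
    intro n hn
    rw [haan n]
    exact aasmall haa1pos ((div_le_iff₀ haa1pos).mp hN0) (Nat.cast_le.mpr hn)
  have hMfacts : ∀ n : ℕ, N0 ≤ n →
      1 ≤ MM n ∧ 0 ≤ aa n + (MM n : ℝ) * alg ∧ aa n + (MM n : ℝ) * alg < alg := by
    intro n hn
    have h1 : alg ≤ -aa n := by have := haasmall n hn; linarith
    have := ceil_props halg h1
    rw [neg_neg] at this
    rw [hMMdef n]
    exact this
  have hnle : ∀ n : ℕ, N0 ≤ n → (n : ℝ) * (-aa1) ≤ (MM n : ℝ) * alg + aa0 := by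
    intro n hn
    have h2 := (hMfacts n hn).2.1
    rw [haan n] at h2
    linarith
  obtain ⟨Q, hQdef⟩ : ∃ Q : ℝ, Q = (alg * Clam + |aa0|) / (-aa1) := ⟨_, rfl⟩
  have hC3 : ∀ n : ℕ, N0 ≤ n → |lam ^ (MM n) * dd n| ≤ |dd0| + |dd1| * Q := by
    intro n hn
    rw [hddn n, hQdef]
    exact bnd2 n (MM n) hlam0 hlam1 halg haa1pos (hnle n hn) (hClam (MM n))
  -- arithmetic subsequence with strictly increasing exponents
  obtain ⟨S0, hS0⟩ := exists_nat_ge (2 * alg / (-aa1))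
  obtain ⟨S, hSdef⟩ : ∃ S : ℕ, S = S0 + 1 := ⟨_, rfl⟩
  have hS1 : 1 ≤ S := by omega
  have hSstep : 2 * alg ≤ (S : ℝ) * (-aa1) := by
    have h1 : 2 * alg ≤ (S0 : ℝ) * (-aa1) := (div_le_iff₀ haa1pos).mp hS0
    have hcast : (S : ℝ) = (S0 : ℝ) + 1 := by rw [hSdef]; push_cast; ring
    rw [hcast]
    exact sstep haa1pos h1
  obtain ⟨nn, hnndef⟩ : ∃ nn : ℕ → ℕ, ∀ k, nn k = N0 + S * k := ⟨_, fun k => rfl⟩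
  have hnnge : ∀ k, N0 ≤ nn k := by intro k; rw [hnndef k]; omega
  have hnnmono : ∀ {a b : ℕ}, a < b → nn a < nn b := by
    intro a b hab
    rw [hnndef a, hnndef b]
    have h1 : S * a < S * b := by
      have : 0 < S := by omega
      exact (Nat.mul_lt_mul_left this).mpr hab
    omega
  have hMMmono : ∀ k, MM (nn k) < MM (nn (k + 1)) := by
    intro k
    have hy : alg ≤ -aa (nn k) := le_neg.mp (haasmall _ (hnnge k))
    have hz : -aa (nn k) + 2 * alg ≤ -aa (nn (k + 1)) := by
      rw [haan (nn k), haan (nn (k + 1))]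
      refine step_ineq (Sr := (S : ℝ)) hSstep ?_
      rw [hnndef k, hnndef (k + 1)]
      push_cast
      ring
    have := ceil_mono_step halg hy hz
    rw [hMMdef (nn k), hMMdef (nn (k + 1))]
    exact this
  have hMMmono' : ∀ {a b : ℕ}, a < b → MM (nn a) < MM (nn b) :=
    fun {a b} hab => (strictMono_nat_of_lt_succ hMMmono) hab
  -- the group elements and witness points
  obtain ⟨ww, hwwdef⟩ : ∃ ww : ℕ → Equiv.Perm (Fin 3 → ℝ),
      ∀ k, ww k = γ ^ (MM (nn k)) * η ^ (nn k) := ⟨_, fun k => rfl⟩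
  obtain ⟨xx, hxxdef⟩ : ∃ xx : ℕ → (Fin 3 → ℝ),
      ∀ k, xx k = q + (mu ^ (nn k) * cc (nn k)) • P' := ⟨_, fun k => rfl⟩
  have hwx : ∀ k, (ww k) (xx k) =
      p + (aa (nn k) + (MM (nn k) : ℝ) * alg) • A + (lam ^ (MM (nn k)) * dd (nn k)) • m := by
    intro k
    rw [hwwdef k, Equiv.Perm.mul_apply]
    have hx' : xx k = q + (0 : ℝ) • B + (mu ^ (nn k) * cc (nn k)) • P' := by
      rw [hxxdef k]; module
    rw [hx', hDη (nn k) 0 (mu ^ (nn k) * cc (nn k))]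
    have hsc : mu⁻¹ ^ (nn k) * (mu ^ (nn k) * cc (nn k)) = cc (nn k) := by
      rw [inv_pow]
      field_simp
    have hzer : (0 : ℝ) + (nn k : ℝ) * alh = (nn k : ℝ) * alh := by ring
    rw [hzer, hsc, ← hrr2 (nn k), hrrdef (nn k)]
    exact hDγ (MM (nn k)) (aa (nn k)) (dd (nn k))
  -- the compact set
  obtain ⟨R1, hR1⟩ : ∃ R : ℝ, R = ‖q‖ + (|cc0| + Cmu * |cc1|) * ‖P'‖ := ⟨_, rfl⟩
  obtain ⟨R2, hR2⟩ : ∃ R : ℝ, R = ‖p‖ + alg * ‖A‖ + (|dd0| + |dd1| * Q) * ‖m‖ := ⟨_, rfl⟩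
  obtain ⟨R, hRdef⟩ : ∃ R : ℝ, R = max R1 R2 := ⟨_, rfl⟩
  have hK : IsCompact (Metric.closedBall (0 : Fin 3 → ℝ) R) := isCompact_closedBall _ _
  have hxK : ∀ k, xx k ∈ Metric.closedBall (0 : Fin 3 → ℝ) R := by
    intro k
    rw [Metric.mem_closedBall, dist_zero_right, hxxdef k]
    have c1 : ‖q + (mu ^ (nn k) * cc (nn k)) • P'‖
        ≤ ‖q‖ + ‖(mu ^ (nn k) * cc (nn k)) • P'‖ := norm_add_le _ _
    have c2 : ‖(mu ^ (nn k) * cc (nn k)) • P'‖ = |mu ^ (nn k) * cc (nn k)| * ‖P'‖ := by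
      rw [norm_smul, Real.norm_eq_abs]
    have c3 : |mu ^ (nn k) * cc (nn k)| * ‖P'‖ ≤ (|cc0| + Cmu * |cc1|) * ‖P'‖ :=
      mul_le_mul_of_nonneg_right (hC1 (nn k)) (norm_nonneg P')
    have c4 : ‖q + (mu ^ (nn k) * cc (nn k)) • P'‖ ≤ R1 := by
      rw [hR1, ← c2] at *
      exact le_trans c1 (add_le_add_right (c2 ▸ c3) _)
    rw [hRdef]
    exact le_trans c4 (le_max_left _ _)
  have hyK : ∀ k, (ww k) (xx k) ∈ Metric.closedBall (0 : Fin 3 → ℝ) R := by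
    intro k
    rw [Metric.mem_closedBall, dist_zero_right, hwx k]
    obtain ⟨hM1, hMl, hMu⟩ := hMfacts (nn k) (hnnge k)
    have c1 : ‖p + (aa (nn k) + (MM (nn k) : ℝ) * alg) • A
        + (lam ^ (MM (nn k)) * dd (nn k)) • m‖
        ≤ ‖p‖ + ‖(aa (nn k) + (MM (nn k) : ℝ) * alg) • A‖
          + ‖(lam ^ (MM (nn k)) * dd (nn k)) • m‖ :=
      le_trans (norm_add_le _ _) (add_le_add_left (norm_add_le _ _) _)
    have c2 : ‖(aa (nn k) + (MM (nn k) : ℝ) * alg) • A‖ ≤ alg * ‖A‖ := by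
      rw [norm_smul, Real.norm_eq_abs, abs_of_nonneg hMl]
      exact mul_le_mul_of_nonneg_right (le_of_lt hMu) (norm_nonneg A)
    have c3 : ‖(lam ^ (MM (nn k)) * dd (nn k)) • m‖ ≤ (|dd0| + |dd1| * Q) * ‖m‖ := by
      rw [norm_smul, Real.norm_eq_abs]
      exact mul_le_mul_of_nonneg_right (hC3 (nn k) (hnnge k)) (norm_nonneg m)
    have c4 : ‖p + (aa (nn k) + (MM (nn k) : ℝ) * alg) • A
        + (lam ^ (MM (nn k)) * dd (nn k)) • m‖ ≤ R2 := by
      rw [hR2]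
      exact le_trans c1 (add_le_add (add_le_add_right c2 _) c3)
    rw [hRdef]
    exact le_trans c4 (le_max_right _ _)
  -- distinctness
  have hwwinj : ∀ {k k' : ℕ}, k < k' → ww k = ww k' → False := by
    intro k k' hkk' heq
    have hM : MM (nn k) < MM (nn k') := hMMmono' hkk'
    have hn : nn k < nn k' := hnnmono hkk'
    obtain ⟨a, ha1, ha2⟩ : ∃ a : ℕ, 1 ≤ a ∧ MM (nn k') = MM (nn k) + a :=
      ⟨MM (nn k') - MM (nn k), by omega, by omega⟩
    obtain ⟨b, hb1, hb2⟩ : ∃ b : ℕ, 1 ≤ b ∧ nn k' = b + nn k :=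
      ⟨nn k' - nn k, by omega, by omega⟩
    rw [hwwdef k, hwwdef k', ha2, hb2, pow_add, pow_add] at heq
    have h1 : γ ^ (MM (nn k)) * η ^ (nn k)
        = γ ^ (MM (nn k)) * (γ ^ a * (η ^ b * η ^ (nn k))) := heq.trans (mul_assoc _ _ _)
    have h2 : η ^ (nn k) = γ ^ a * (η ^ b * η ^ (nn k)) := mul_left_cancel h1
    have h3 : (1 : Equiv.Perm (Fin 3 → ℝ)) * η ^ (nn k) = (γ ^ a * η ^ b) * η ^ (nn k) := by
      rw [one_mul, mul_assoc]
      exact h2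
    have h5 : γ ^ a * η ^ b = 1 := (mul_right_cancel h3).symm
    have happ : ∀ x, (γ ^ a) ((η ^ b) x) = x := by
      intro x
      have h6 : (γ ^ a * η ^ b) x = (1 : Equiv.Perm (Fin 3 → ℝ)) x := by rw [h5]
      simpa [Equiv.Perm.mul_apply] using h6
    obtain ⟨u, hu⟩ := affine_pow_exists hγ a
    obtain ⟨u', hu'⟩ := affine_pow_exists hη b
    have hTc : ∀ x, (g ^ a).mulVec ((h ^ b).mulVec x) + ((g ^ a).mulVec u' + u) = x := by
      intro x
      have h6 := happ x
      rw [hu', hu, Matrix.mulVec_add] at h6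
      rw [← add_assoc]
      exact h6
    have hT0 : (g ^ a).mulVec u' + u = 0 := by
      have := hTc 0
      rwa [Matrix.mulVec_zero, Matrix.mulVec_zero, zero_add] at this
    have hT : ∀ x, (g ^ a).mulVec ((h ^ b).mulVec x) = x := by
      intro x
      have := hTc x
      rwa [hT0, add_zero] at this
    have h7 : (g ^ a).mulVec ((mu⁻¹ ^ b) • P') = P' := by
      rw [← pow_eig hhP b]
      exact hT P'
    rw [Matrix.mulVec_smul] at h7
    have h8 : (g ^ a).mulVec P' = (mu ^ b) • P' := by
      have h9 := congrArg (fun z => (mu ^ b) • z) h7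
      simp only [smul_smul] at h9
      have hfi : mu ^ b * mu⁻¹ ^ b = 1 := by
        rw [inv_pow]; field_simp
      rw [hfi, one_smul] at h9
      exact h9
    have h10 := pow_ldot hgi a m P'
    rw [pow_eig hgm a, h8, ldot_smul_both] at h10
    have h12 : (lam ^ a * mu ^ b - 1) * ldot m P' = 0 := by linear_combination h10
    rcases mul_eq_zero.mp h12 with hz | hz
    · exact prod_pow_ne_one hlam0 hlam1 hmu0 hmu1 ha1 hb1 (sub_eq_zero.mp hz)
    · exact hk2ne (hk2def.trans hz)
  -- assemble the infinite family
  have hwwG : ∀ k, ww k ∈ G := fun k => by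
    rw [hwwdef k]; exact mul_mem (pow_mem hγG _) (pow_mem hηG _)
  have hinf : {w : G | ((fun x => (w : Equiv.Perm (Fin 3 → ℝ)) x) ''
      Metric.closedBall (0 : Fin 3 → ℝ) R ∩ Metric.closedBall (0 : Fin 3 → ℝ) R).Nonempty}.Infinite := by
    apply Set.infinite_of_injective_forall_mem
      (f := fun k : ℕ => (⟨ww k, hwwG k⟩ : G))
    · intro k k' hkeq
      have hww : ww k = ww k' := congrArg Subtype.val hkeq
      rcases lt_trichotomy k k' with hlt | heqq | hgt
      · exact absurd hww (fun hc => hwwinj hlt hc)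
      · exact heqq
      · exact absurd hww.symm (fun hc => hwwinj hgt hc)
    · intro k
      exact ⟨(ww k) (xx k), ⟨xx k, hxK k, rfl⟩, hyK k⟩
  exact hinf (hprop _ hK)


lemma ldot_neg_both (x y : Fin 3 → ℝ) : ldot (-x) (-y) = ldot x y := by
  simp only [ldot, Pi.neg_apply]; ring

lemma det3_negswap (x y z : Fin 3 → ℝ) : det3 (-x) z y = det3 x y z := by
  simp only [det3_eq, Pi.neg_apply]; ring

lemma inv_parts {hM : Matrix (Fin 3) (Fin 3) ℝ} (hdet : hM.det = 1) :
    (∀ x, hM⁻¹.mulVec (hM.mulVec x) = x) ∧ (∀ x, hM.mulVec (hM⁻¹.mulVec x) = x) := by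
  have hu : IsUnit hM.det := by rw [hdet]; exact isUnit_one
  constructor <;> intro x
  · rw [Matrix.mulVec_mulVec, Matrix.nonsing_inv_mul _ hu, Matrix.one_mulVec]
  · rw [Matrix.mulVec_mulVec, Matrix.mul_nonsing_inv _ hu, Matrix.one_mulVec]

set_option maxHeartbeats 1000000 in
lemma keyDichot (G : Subgroup (Equiv.Perm (Fin 3 → ℝ)))
    (g h : Matrix (Fin 3) (Fin 3) ℝ)
    (hgi : ∀ x y, ldot (g.mulVec x) (g.mulVec y) = ldot x y)
    (hhi : ∀ x y, ldot (h.mulVec x) (h.mulVec y) = ldot x y)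
    (hdeth : h.det = 1)
    (vg vh A m P B m' P' : Fin 3 → ℝ) (lam mu : ℝ)
    (hlam0 : 0 < lam) (hlam1 : lam < 1) (hmu0 : 0 < mu) (hmu1 : mu < 1)
    (hgA : g.mulVec A = A) (hAA : ldot A A = 1)
    (hgm : g.mulVec m = lam • m) (hgP : g.mulVec P = lam⁻¹ • P)
    (hm : IsFutureNull m) (hP : IsFutureNull P) (hD : 0 < det3 A m P)
    (hhB : h.mulVec B = B) (hBB : ldot B B = 1)
    (hhm : h.mulVec m' = mu • m') (hhP : h.mulVec P' = mu⁻¹ • P')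
    (hm' : IsFutureNull m') (hP' : IsFutureNull P') (hD' : 0 < det3 B m' P')
    (halg : 0 < ldot vg A) (halh : ldot vh B < 0)
    (γ η : Equiv.Perm (Fin 3 → ℝ))
    (hγ : ∀ x, γ x = g.mulVec x + vg) (hη : ∀ x, η x = h.mulVec x + vh)
    (hγG : γ ∈ G) (hηG : η ∈ G) :
    ¬ ∀ K : Set (Fin 3 → ℝ), IsCompact K →
        {w : G | ((fun x => (w : Equiv.Perm (Fin 3 → ℝ)) x) '' K ∩ K).Nonempty}.Finite := by
  by_cases hc : ldot m P' ≠ 0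
  · exact key G g h hgi hhi vg vh A m P B m' P' lam mu hlam0 hlam1 hmu0 hmu1 hgA hAA hgm hgP
      hm hP hD hhB hBB hhm hhP hm' hP' hD' halg halh hc γ η hγ hη hγG hηG
  · push_neg at hc
    have hkh' : ldot m' P' < 0 := null_ldot_neg hm' hP' (ne_of_gt hD')
    have hk2b : ldot m m' ≠ 0 := by
      intro hc2
      have h1 := null_collinear hm hP' hc
      have h2 := null_collinear hm hm' hc2
      have h3 : ldot m' P' = 0 := by
        rw [h1, h2, ldot_smul_both, hm.1]
        ring
      exact absurd h3 (ne_of_lt hkh')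
    obtain ⟨hinv1, hinv2⟩ := inv_parts hdeth
    have hhi' : ∀ x y, ldot (h⁻¹.mulVec x) (h⁻¹.mulVec y) = ldot x y := by
      intro x y
      have h1 := hhi (h⁻¹.mulVec x) (h⁻¹.mulVec y)
      rw [hinv2 x, hinv2 y] at h1
      exact h1.symm
    have hiB : h⁻¹.mulVec B = B := by
      have h1 := hinv1 B
      rw [hhB] at h1
      exact h1
    have hiB' : h⁻¹.mulVec (-B) = -B := by
      have : (-B : Fin 3 → ℝ) = (-1 : ℝ) • B := by funext i; simp
      rw [this, Matrix.mulVec_smul, hiB]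
    have hiP' : h⁻¹.mulVec P' = mu • P' := by
      have h1 := hinv1 P'
      rw [hhP, Matrix.mulVec_smul] at h1
      have h2 := congrArg (fun z => mu • z) h1
      simp only [smul_smul] at h2
      rw [mul_inv_cancel₀ (ne_of_gt hmu0), one_smul] at h2
      exact h2
    have him' : h⁻¹.mulVec m' = mu⁻¹ • m' := by
      have h1 := hinv1 m'
      rw [hhm, Matrix.mulVec_smul] at h1
      have h2 := congrArg (fun z => mu⁻¹ • z) h1
      simp only [smul_smul] at h2
      rw [inv_mul_cancel₀ (ne_of_gt hmu0), one_smul] at h2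
      exact h2
    have hBB' : ldot (-B) (-B) = 1 := by rw [ldot_neg_both]; exact hBB
    have hD'' : 0 < det3 (-B) P' m' := by rw [det3_negswap]; exact hD'
    have hη' : ∀ x, (η⁻¹ : Equiv.Perm (Fin 3 → ℝ)) x
        = h⁻¹.mulVec x + (-(h⁻¹.mulVec vh)) := by
      intro x
      have h1 : η (h⁻¹.mulVec x + (-(h⁻¹.mulVec vh))) = x := by
        rw [hη, Matrix.mulVec_add]
        have hneg : (-(h⁻¹.mulVec vh) : Fin 3 → ℝ) = (-1 : ℝ) • (h⁻¹.mulVec vh) := by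
          funext i; simp
        rw [hneg, Matrix.mulVec_smul, hinv2, hinv2]
        funext i
        simp only [Pi.add_apply, Pi.smul_apply, smul_eq_mul]
        ring
      have h2 : (η⁻¹ : Equiv.Perm (Fin 3 → ℝ)) (η (h⁻¹.mulVec x + (-(h⁻¹.mulVec vh))))
          = (η⁻¹ : Equiv.Perm (Fin 3 → ℝ)) x := by rw [h1]
      rw [← Equiv.Perm.mul_apply, inv_mul_cancel, Equiv.Perm.one_apply] at h2
      exact h2.symm
    have halh' : ldot (-(h⁻¹.mulVec vh)) (-B) < 0 := by
      rw [ldot_neg_both]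
      have h1 : ldot (h⁻¹.mulVec vh) (h⁻¹.mulVec B) = ldot vh B := hhi' vh B
      rw [hiB] at h1
      rw [h1]
      exact halh
    exact key G g h⁻¹ hgi hhi' vg (-(h⁻¹.mulVec vh)) A m P (-B) P' m' lam mu
      hlam0 hlam1 hmu0 hmu1 hgA hAA hgm hgP hm hP hD hiB' hBB' hiP' him' hP' hm' hD''
      halg halh' hk2b γ η⁻¹ hγ hη' hγG (inv_mem hηG)

end MAux

/-- Margulis' criterion: if γ : x ↦ g x + v_g and η : x ↦ h x + v_h are hyperbolic
affine isometries whose Margulis invariants α(γ) = ⟨v_g, x⁰(g)⟩ and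
α(η) = ⟨v_h, x⁰(h)⟩ have opposite signs, then ⟨γ, η⟩ does not act properly
discontinuously on ℝ^{2,1}. -/
theorem stmt_17 (g h : Matrix (Fin 3) (Fin 3) ℝ) (hg : IsSOplus g) (hh : IsSOplus h)
    (vg vh x0g xmg xpg x0h xmh xph : Fin 3 → ℝ)
    (hfg : IsNullFrameOf g x0g xmg xpg) (hfh : IsNullFrameOf h x0h xmh xph)
    (γ η : Equiv.Perm (Fin 3 → ℝ))
    (hγ : ∀ x, γ x = g.mulVec x + vg) (hη : ∀ x, η x = h.mulVec x + vh)
    (hsign : ldot vg x0g * ldot vh x0h < 0) :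
    ¬ ∀ K : Set (Fin 3 → ℝ), IsCompact K →
        {w : Subgroup.closure ({γ, η} : Set (Equiv.Perm (Fin 3 → ℝ))) |
          ((fun x => (w : Equiv.Perm (Fin 3 → ℝ)) x) '' K ∩ K).Nonempty}.Finite := by
  obtain ⟨hgi, hgdet, _⟩ := hg
  obtain ⟨hhi, hhdet, _⟩ := hh
  obtain ⟨hgx0, hgx0n, hmg, _, hpg, _, lam, hlam0, hlam1, hgxm, hgxp, hDg⟩ := hfg
  obtain ⟨hhx0, hhx0n, hmh, _, hph, _, mu, hmu0, hmu1, hhxm, hhxp, hDh⟩ := hfh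
  have hγmem : γ ∈ Subgroup.closure ({γ, η} : Set (Equiv.Perm (Fin 3 → ℝ))) :=
    Subgroup.subset_closure (by simp)
  have hηmem : η ∈ Subgroup.closure ({γ, η} : Set (Equiv.Perm (Fin 3 → ℝ))) :=
    Subgroup.subset_closure (by simp)
  rcases mul_neg_iff.mp hsign with ⟨hpos, hneg⟩ | ⟨hneg, hpos⟩
  · exact MAux.keyDichot (Subgroup.closure {γ, η}) g h hgi hhi hhdet vg vh x0g xmg xpg x0h
      xmh xph lam mu hlam0 hlam1 hmu0 hmu1 hgx0 hgx0n hgxm hgxp hmg hpg hDg hhx0 hhx0n hhxm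
      hhxp hmh hph hDh hpos hneg γ η hγ hη hγmem hηmem
  · exact MAux.keyDichot (Subgroup.closure {γ, η}) h g hhi hgi hgdet vh vg x0h xmh xph x0g
      xmg xpg mu lam hmu0 hmu1 hlam0 hlam1 hhx0 hhx0n hhxm hhxp hmh hph hDh hgx0 hgx0n hgxm
      hgxp hmg hpg hDg hpos hneg η γ hη hγ hηmem hγmem

end
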